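/- Let I ⊆ S be a monomial ideal with minimal monomial generators m_1, ..., m_t, and suppose this ordering makes I shellable: for all j < i there exist k < i and an index g ∈ {1,...,n} such that x_g·m_i = lcm(m_k, m_i) and lcm(m_k, m_i) divides lcm(m_j, m_i). Then I has linear quotients with respect to this ordering; more precisely, for every 1 < i ≤ t the colon ideal (m_1, ..., m_{i−1}) : m_i is the ideal generated by the set of variables { x_g : there exists k < i with x_g·m_i = lcm(m_k, m_i) }. -/

import Mathlib

open MvPolynomial

/-- Let `I ⊆ S = k[x_1,…,x_n]` be a monomial ideal with minimal monomial
generators `m_1, …, m_t` (encoded by their exponent vectors `m : Fin t → (Fin n →₀ ℕ)`;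
minimality means no generator divides another).  Suppose this ordering makes `I` shellable:
for all `j < i` there exist `l < i` and an index `g` such that
`x_g·m_i = lcm(m_l, m_i)` and `lcm(m_l, m_i)` divides `lcm(m_j, m_i)`.
Then `I` has linear quotients with respect to this ordering; more precisely, for every
`1 < i ≤ t` the colon ideal `(m_1, …, m_{i−1}) : m_i` is the ideal generated by the set of
variables `{ x_g : ∃ l < i, x_g·m_i = lcm(m_l, m_i) }`.
(`lcm` of monomials corresponds to `⊔` on exponent vectors and divisibility to `≤`.) -/
theorem stmt_1 (k : Type) [Field k] (n t : ℕ)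
    (m : Fin t → (Fin n →₀ ℕ))
    (hmin : ∀ i j : Fin t, i ≠ j → ¬ m i ≤ m j)
    (hshell : ∀ i j : Fin t, j < i → ∃ l : Fin t, l < i ∧ ∃ g : Fin n,
      Finsupp.single g 1 + m i = m l ⊔ m i ∧ m l ⊔ m i ≤ m j ⊔ m i) :
    ∀ i : Fin t, 0 < (i : ℕ) →
      Submodule.colon
        (Ideal.span ((fun j => monomial (m j) (1 : k)) '' {j | j < i}))
        (Ideal.span {monomial (m i) (1 : k)})
      = Ideal.span ((fun g => (X g : MvPolynomial (Fin n) k)) ''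
          {g | ∃ l : Fin t, l < i ∧ Finsupp.single g 1 + m i = m l ⊔ m i}) := by
  intro i _hi
  have himg : ((fun j => monomial (m j) (1 : k)) '' {j | j < i})
      = (fun s => monomial s (1 : k)) '' (m '' {j | j < i}) := by
    rw [Set.image_image]
  ext f
  rw [Submodule.mem_colon,
    show ((fun g => (X g : MvPolynomial (Fin n) k)) ''
      {g | ∃ l : Fin t, l < i ∧ Finsupp.single g 1 + m i = m l ⊔ m i})
      = X '' {g | ∃ l : Fin t, l < i ∧ Finsupp.single g 1 + m i = m l ⊔ m i} from rfl,
    mem_ideal_span_X_image]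
  constructor
  · intro hf u hu
    have h1 : f * monomial (m i) (1 : k)
        ∈ Ideal.span ((fun j => monomial (m j) (1 : k)) '' {j | j < i}) := by
      have := hf (monomial (m i) 1) (Ideal.subset_span (Set.mem_singleton _))
      simpa [smul_eq_mul] using this
    rw [himg, mem_ideal_span_monomial_image] at h1
    have hsup : u + m i ∈ (f * monomial (m i) (1 : k)).support := by
      rw [mem_support_iff, coeff_mul_monomial]
      simpa using mem_support_iff.mp hu
    obtain ⟨s, hs, hle⟩ := h1 _ hsup
    obtain ⟨j, hj, rfl⟩ := hs
    obtain ⟨l, hl, g, hg1, hg2⟩ := hshell i j hj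
    refine ⟨g, ⟨l, hl, hg1⟩, ?_⟩
    have h2 : Finsupp.single g 1 + m i ≤ u + m i := by
      rw [hg1]
      exact le_trans hg2 (sup_le hle le_add_self)
    have h3 : Finsupp.single g 1 ≤ u := (add_le_add_iff_right (m i)).mp h2
    have h4 : (1 : ℕ) ≤ u g := Finsupp.single_le_iff.mp h3
    omega
  · intro hf p hp
    rw [SetLike.mem_coe, Ideal.mem_span_singleton'] at hp
    obtain ⟨a, rfl⟩ := hp
    have key : f * monomial (m i) (1 : k)
        ∈ Ideal.span ((fun j => monomial (m j) (1 : k)) '' {j | j < i}) := by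
      rw [himg, mem_ideal_span_monomial_image]
      intro v hv
      rw [mem_support_iff, coeff_mul_monomial'] at hv
      split_ifs at hv with h
      · obtain ⟨g, ⟨l, hl, hg⟩, hne⟩ := hf _ (mem_support_iff.mpr (by
          intro hc; rw [hc] at hv; simp at hv))
        refine ⟨m l, ⟨l, hl, rfl⟩, ?_⟩
        have h1 : m l ≤ Finsupp.single g 1 + m i := hg ▸ le_sup_left
        have h2 : Finsupp.single g 1 ≤ v - m i :=
          Finsupp.single_le_iff.mpr (by omega)
        calc m l ≤ Finsupp.single g 1 + m i := h1
          _ ≤ (v - m i) + m i := add_le_add_left h2 _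
          _ = v := tsub_add_cancel_of_le h
      · simp at hv
    have : f • (a * monomial (m i) (1 : k)) = a * (f * monomial (m i) (1 : k)) := by
      rw [smul_eq_mul]; ring
    rw [this]
    exact Ideal.mul_mem_left _ a key
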